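/- arXiv:0903.1097 — 2 statements merged into one kernel-verified Lean document; each statement's English description precedes it below -/
import Mathlib

section
/- Uniqueness of closures of minimal limit sets: Let K be a valued field, X ⊆ K^n × K^m, and a ∈ K^n. Say L ⊆ K^m is a limit set of X at a if for every ε ∈ Γ there is δ ∈ Γ such that whenever c ∈ o(a, δ) ∩ (π(X) ∖ {a}) (π the projection to K^n), the fiber {b : (c,b) ∈ X} is contained in ∪_{b ∈ L'} o(b, ε) for some subset L' ⊆ L. A limit set L is minimal if no proper subset of L is a limit set of X at a. If L₁ and L₂ are both minimal limit sets of X at a, then their topological closures (in the valuation topology on K^m) coincide. -/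
/-- The open polyball around `c` of radius `ε` in `K^m`. -/
def polyball {K Γ : Type*} [Field K] [AddCommGroup Γ] [LinearOrder Γ] [IsOrderedAddMonoid Γ]
    (v : K → WithTop Γ) {m : ℕ} (c : Fin m → K) (ε : Γ) : Set (Fin m → K) :=
  {y | ∀ j, (ε : WithTop Γ) < v (y j - c j)}

/-- The valuation topology on `K^m`, generated by the open polyballs. -/
def valTopology {K Γ : Type*} [Field K] [AddCommGroup Γ] [LinearOrder Γ] [IsOrderedAddMonoid Γ]
    (v : K → WithTop Γ) (m : ℕ) : TopologicalSpace (Fin m → K) :=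
  TopologicalSpace.generateFrom {S | ∃ c ε, S = polyball v c ε}

/-- `L ⊆ K^m` is a limit set of `X ⊆ K^n × K^m` at `a ∈ K^n`: for every
`ε ∈ Γ` there is `δ ∈ Γ` such that whenever `c ∈ o(a, δ) ∩ (π(X) ∖ {a})`,
the fiber of `X` over `c` is contained in `⋃_{b ∈ L'} o(b, ε)` for some
`L' ⊆ L`. -/
def IsLimitSet {K Γ : Type*} [Field K] [AddCommGroup Γ] [LinearOrder Γ] [IsOrderedAddMonoid Γ]
    (v : K → WithTop Γ) {n m : ℕ}
    (X : Set ((Fin n → K) × (Fin m → K))) (a : Fin n → K)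
    (L : Set (Fin m → K)) : Prop :=
  ∀ ε : Γ, ∃ δ : Γ, ∀ c : Fin n → K,
    c ∈ polyball v a δ → c ≠ a → c ∈ Prod.fst '' X →
      ∃ L' ⊆ L, {b | (c, b) ∈ X} ⊆ ⋃ d ∈ L', polyball v d ε

section Aux

variable {K Γ : Type*} [Field K] [AddCommGroup Γ] [LinearOrder Γ] [IsOrderedAddMonoid Γ]
  (v : K → WithTop Γ) {m : ℕ}

lemma polyball_mono {b : Fin m → K} {ε ε' : Γ} (h : ε ≤ ε') :
    polyball v b ε' ⊆ polyball v b ε :=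
  fun y hy j => lt_of_le_of_lt (WithTop.coe_le_coe.mpr h) (hy j)

lemma polyball_trans (hadd : ∀ x y : K, min (v x) (v y) ≤ v (x + y))
    {b c : Fin m → K} {ε : Γ} (hb : b ∈ polyball v c ε) :
    polyball v b ε ⊆ polyball v c ε := by
  intro y hy j
  have h : y j - c j = (y j - b j) + (b j - c j) := by ring
  calc (ε : WithTop Γ) < min (v (y j - b j)) (v (b j - c j)) := lt_min (hy j) (hb j)
    _ ≤ v ((y j - b j) + (b j - c j)) := hadd _ _
    _ = v (y j - c j) := by rw [← h]

lemma exists_polyball_subset (hadd : ∀ x y : K, min (v x) (v y) ≤ v (x + y))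
    {U : Set (Fin m → K)}
    (hU : TopologicalSpace.GenerateOpen {S | ∃ c ε, S = polyball v c ε} U)
    {b : Fin m → K} (hb : b ∈ U) : ∃ ε : Γ, polyball v b ε ⊆ U := by
  induction hU with
  | basic S hS =>
      obtain ⟨c, ε, rfl⟩ := hS
      exact ⟨ε, polyball_trans v hadd hb⟩
  | univ => exact ⟨0, Set.subset_univ _⟩
  | inter U V hU hV ihU ihV =>
      obtain ⟨ε₁, h1⟩ := ihU hb.1
      obtain ⟨ε₂, h2⟩ := ihV hb.2
      exact ⟨max ε₁ ε₂, Set.subset_inter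
        ((polyball_mono v (le_max_left _ _)).trans h1)
        ((polyball_mono v (le_max_right _ _)).trans h2)⟩
  | sUnion S hS ih =>
      obtain ⟨U, hUS, hbU⟩ := hb
      obtain ⟨ε, hε⟩ := ih U hUS hbU
      exact ⟨ε, hε.trans (Set.subset_sUnion_of_mem hUS)⟩

lemma key {n : ℕ}
    (hadd : ∀ x y : K, min (v x) (v y) ≤ v (x + y))
    (hneg : ∀ x : K, v (-x) = v x)
    (X : Set ((Fin n → K) × (Fin m → K))) (a : Fin n → K)
    (L₁ L₂ : Set (Fin m → K))
    (h₁ : IsLimitSet v X a L₁) (h₁min : ∀ L' ⊂ L₁, ¬ IsLimitSet v X a L')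
    (h₂ : IsLimitSet v X a L₂) :
    L₁ ⊆ @closure _ (valTopology v m) L₂ := by
  letI t := valTopology v m
  intro b hb
  by_contra hbc
  rw [mem_closure_iff] at hbc
  push_neg at hbc
  obtain ⟨U, hUopen, hbU, hUL₂⟩ := hbc
  obtain ⟨ε₀, hε₀⟩ := exists_polyball_subset v hadd hUopen hbU
  have hdisj : polyball v b ε₀ ∩ L₂ = ∅ := by
    apply Set.eq_empty_of_subset_empty
    rw [← hUL₂]; exact Set.inter_subset_inter_left _ hε₀
  apply h₁min (L₁ \ {b}) (Set.sdiff_singleton_ssubset.mpr hb)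
  intro ε
  set ε' := max ε ε₀ with hε'
  obtain ⟨δ₁, hδ₁⟩ := h₁ ε'
  obtain ⟨δ₂, hδ₂⟩ := h₂ ε'
  refine ⟨max δ₁ δ₂, fun c hc hca hcX => ?_⟩
  obtain ⟨L₁', hL₁'sub, hcov₁⟩ := hδ₁ c (polyball_mono v (le_max_left _ _) hc) hca hcX
  obtain ⟨L₂', hL₂'sub, hcov₂⟩ := hδ₂ c (polyball_mono v (le_max_right _ _) hc) hca hcX
  refine ⟨L₁' \ {b}, Set.diff_subset_diff_left hL₁'sub, fun x hx => ?_⟩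
  obtain ⟨d, hd, hxd⟩ := Set.mem_iUnion₂.mp (hcov₁ hx)
  by_cases hdb : d = b
  · subst hdb
    exfalso
    obtain ⟨d', hd', hxd'⟩ := Set.mem_iUnion₂.mp (hcov₂ hx)
    have hmem : d' ∈ polyball v d ε₀ ∩ L₂ := by
      refine ⟨fun j => ?_, hL₂'sub hd'⟩
      have h1 : (ε₀ : WithTop Γ) < v (d' j - x j) := by
        rw [show d' j - x j = -(x j - d' j) by ring, hneg]
        exact lt_of_le_of_lt (WithTop.coe_le_coe.mpr (le_max_right ε ε₀)) (hxd' j)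
      have h2 : (ε₀ : WithTop Γ) < v (x j - d j) :=
        lt_of_le_of_lt (WithTop.coe_le_coe.mpr (le_max_right ε ε₀)) (hxd j)
      calc (ε₀ : WithTop Γ) < min (v (d' j - x j)) (v (x j - d j)) := lt_min h1 h2
        _ ≤ v ((d' j - x j) + (x j - d j)) := hadd _ _
        _ = v (d' j - d j) := by rw [show (d' j - x j) + (x j - d j) = d' j - d j by ring]
    rw [hdisj] at hmem
    exact hmem
  · exact Set.mem_iUnion₂.mpr ⟨d, ⟨hd, hdb⟩, polyball_mono v (le_max_left _ _) hxd⟩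

end Aux

/-- if `L₁` and `L₂` are both minimal limit sets of `X` at `a`,
then their topological closures in the valuation topology coincide. -/
theorem minimal_limit_sets_closure_eq
    {K Γ : Type*} [Field K] [AddCommGroup Γ] [LinearOrder Γ] [IsOrderedAddMonoid Γ]
    (v : K → WithTop Γ)
    (hadd : ∀ x y : K, min (v x) (v y) ≤ v (x + y))
    (hneg : ∀ x : K, v (-x) = v x)
    {n m : ℕ} (X : Set ((Fin n → K) × (Fin m → K))) (a : Fin n → K)
    (L₁ L₂ : Set (Fin m → K))
    (h₁ : IsLimitSet v X a L₁) (h₁min : ∀ L' ⊂ L₁, ¬ IsLimitSet v X a L')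
    (h₂ : IsLimitSet v X a L₂) (h₂min : ∀ L' ⊂ L₂, ¬ IsLimitSet v X a L') :
    @closure _ (valTopology v m) L₁ = @closure _ (valTopology v m) L₂ := by
  letI t := valTopology v m
  apply subset_antisymm
  · have := key v hadd hneg X a L₁ L₂ h₁ h₁min h₂
    calc closure L₁ ⊆ closure (closure L₂) := closure_mono this
      _ = closure L₂ := closure_closure
  · have := key v hadd hneg X a L₂ L₁ h₂ h₂min h₁
    calc closure L₂ ⊆ closure (closure L₁) := closure_mono this
      _ = closure L₁ := closure_closure
end

section
/- Non-isolated points can be removed from limit sets: Let K be a valued field, X ⊆ K^n × K^m with projection Z to K^n, a ∈ K^n, and L ⊆ K^m a limit set of X at a. If b ∈ L is not isolated in L (with respect to the valuation topology), then L ∖ {b} is also a limit set of X at a. -/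
/-- if `b ∈ L` is not isolated in the limit set `L` of `X` at `a`
(every polyball around `b` meets `L` in a point other than `b`), then
`L ∖ {b}` is also a limit set of `X` at `a`. -/
theorem limit_set_remove_nonisolated
    {K Γ : Type*} [Field K] [AddCommGroup Γ] [LinearOrder Γ] [IsOrderedAddMonoid Γ]
    (v : K → WithTop Γ)
    (hadd : ∀ x y : K, min (v x) (v y) ≤ v (x + y))
    (hneg : ∀ x : K, v (-x) = v x)
    {n m : ℕ} (X : Set ((Fin n → K) × (Fin m → K))) (a : Fin n → K)
    (L : Set (Fin m → K)) (b : Fin m → K) (hb : b ∈ L)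
    (hL : IsLimitSet v X a L)
    (hniso : ∀ ε : Γ, ∃ y ∈ L, y ≠ b ∧ y ∈ polyball v b ε) :
    IsLimitSet v X a (L \ {b}) := by
  intro ε
  obtain ⟨y, hyL, hyb, hyball⟩ := hniso ε
  obtain ⟨δ, hδ⟩ := hL ε
  refine ⟨δ, fun c hc hca hcX => ?_⟩
  obtain ⟨L', hL'L, hcov⟩ := hδ c hc hca hcX
  refine ⟨(L' \ {b}) ∪ {y}, ?_, ?_⟩
  · rintro d (⟨hd, hdb⟩ | hd)
    · exact ⟨hL'L hd, hdb⟩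
    · rw [Set.mem_singleton_iff] at hd
      subst hd; exact ⟨hyL, hyb⟩
  · intro z hz
    obtain ⟨d, hd, hzd⟩ := by simpa using hcov hz
    simp only [Set.mem_iUnion, exists_prop]
    by_cases hdb : d = b
    · rw [hdb] at hzd
      refine ⟨y, Or.inr rfl, fun j => ?_⟩
      have h1 : (ε : WithTop Γ) < v (z j - b j) := hzd j
      have h2 : (ε : WithTop Γ) < v (b j - y j) := by
        have := hyball j
        rwa [← hneg, neg_sub] at this
      calc (ε : WithTop Γ) < min (v (z j - b j)) (v (b j - y j)) :=
            lt_min h1 h2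
        _ ≤ v ((z j - b j) + (b j - y j)) := hadd _ _
        _ = v (z j - y j) := by ring_nf
    · exact ⟨d, Or.inl ⟨hd, hdb⟩, hzd⟩
end
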